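/- arXiv:1610.05346 — 2 statements merged into one kernel-verified Lean document; each statement's English description precedes it below -/
import Mathlib

section
/- Let D be the diagonal 3×3 matrix with entries ((1+N)^{-3/2}, (1+N)^{-1/2}, (1+N)^{-1/2}) for N ≥ 0, let O be an orthogonal 3×3 matrix, and for a fixed center (t_*, x_*, v_*) with N - 1/2 ≤ |v_*| ≤ N + 1/2, define the change of coordinates X = D^{-1} O^T (x - v_*(t - t_*)), X_* = D^{-1} O^T x_*, V = D^{-1} O^T (v - v_*). Set r_0 = (2+N)^{-m}, r_1 = (2+N)^{-2m/3 + 5/6} for m > 9. Then whenever (t,x,v) satisfies |t - t_*| ≤ r_0^2, |x - x_*| ≤ r_0^3, |v - v_*| ≤ r_0, the transformed point satisfies |t - t_*| ≤ r_1^2, |X - X_*| ≤ r_1^3, |V| ≤ r_1. -/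
noncomputable section

abbrev R3 := EuclideanSpace ℝ (Fin 3)

lemma norm_sq_R3 (w : R3) : ‖w‖ ^ 2 = ∑ i, w i ^ 2 := by
  rw [EuclideanSpace.norm_eq, Real.sq_sqrt (by positivity)]
  simp [sq_abs]

lemma orth_norm (O : Matrix (Fin 3) (Fin 3) ℝ) (hO : O * O.transpose = 1) (w z : R3)
    (hz : z = O.transpose.mulVec w) : ‖z‖ = ‖w‖ := by
  have h : ‖z‖ ^ 2 = ‖w‖ ^ 2 := by
    rw [norm_sq_R3 z, norm_sq_R3 w]
    have e1 : ∑ i, z i ^ 2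
        = dotProduct (O.transpose.mulVec w) (O.transpose.mulVec w) := by
      rw [← hz]; simp [dotProduct, sq]
    rw [e1, Matrix.dotProduct_mulVec, Matrix.vecMul_transpose, Matrix.mulVec_mulVec, hO,
      Matrix.one_mulVec]
    simp [dotProduct, sq]
  nlinarith [norm_nonneg z, norm_nonneg w]

lemma key (N : ℝ) (hN : 0 ≤ N) (O : Matrix (Fin 3) (Fin 3) ℝ)
    (hO : O * O.transpose = 1) (w u : R3)
    (hu : u = ((Matrix.diagonal fun i : Fin 3 => if i = 0 then (1+N)^((3:ℝ)/2) else (1+N)^((1:ℝ)/2))).mulVec (O.transpose.mulVec w)) :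
    ‖u‖ ≤ (1+N)^((3:ℝ)/2) * ‖w‖ := by
  have hbase : (1:ℝ) ≤ 1 + N := by linarith
  set d : Fin 3 → ℝ := fun i => if i = 0 then (1+N)^((3:ℝ)/2) else (1+N)^((1:ℝ)/2) with hd
  have hdle : ∀ i, d i ≤ (1+N)^((3:ℝ)/2) := by
    intro i
    by_cases hi : i = 0 <;> simp [hd, hi]
    exact Real.rpow_le_rpow_of_exponent_le hbase (by norm_num)
  have hdpos : ∀ i, 0 ≤ d i := by
    intro i; by_cases hi : i = 0 <;> simp [hd, hi] <;> positivity
  set y : R3 := (WithLp.toLp 2 (O.transpose.mulVec w) : R3) with hy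
  have hysq : ‖u‖ ^ 2 ≤ ((1+N)^((3:ℝ)/2)) ^ 2 * ‖y‖ ^ 2 := by
    rw [norm_sq_R3 u, norm_sq_R3 y, Finset.mul_sum]
    apply Finset.sum_le_sum
    intro i _
    have e : u i = d i * y i := by
      rw [hu]; simp [Matrix.mulVec_diagonal, hy]
    rw [e, mul_pow]
    have h1 := hdle i; have h2 := hdpos i
    have h3 : d i ^ 2 ≤ ((1+N)^((3:ℝ)/2)) ^ 2 := by nlinarith
    nlinarith [mul_nonneg (sub_nonneg.2 h3) (sq_nonneg (y i))]
  rw [orth_norm O hO w y (by simp [hy])] at hysq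
  nlinarith [norm_nonneg u, norm_nonneg w,
    Real.rpow_nonneg (by linarith : (0:ℝ) ≤ 1+N) ((3:ℝ)/2),
    mul_nonneg (Real.rpow_nonneg (by linarith : (0:ℝ) ≤ 1+N) ((3:ℝ)/2)) (norm_nonneg w)]

/-- Change of coordinates lemma: with `D = diag((1+N)^{-3/2},(1+N)^{-1/2},(1+N)^{-1/2})`,
`O` orthogonal, `X = D⁻¹ Oᵀ (x - v_*(t-t_*))`, `X_* = D⁻¹ Oᵀ x_*`,
`V = D⁻¹ Oᵀ (v - v_*)`, `r₀ = (2+N)^{-m}`, `r₁ = (2+N)^{-2m/3+5/6}`, `m > 9`: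
if `(t,x,v) ∈ Q_{r₀}(t_*,x_*,v_*)` then `(t,X,V) ∈ Q_{r₁}(t_*,X_*,0)`. -/
theorem stmt4 (N m : ℝ) (hN : 0 ≤ N) (hm : 9 < m)
    (tstar t : ℝ) (xstar vstar x v : R3)
    (hvlo : N - 1/2 ≤ ‖vstar‖) (hvhi : ‖vstar‖ ≤ N + 1/2)
    (O : Matrix (Fin 3) (Fin 3) ℝ)
    (hO : O * O.transpose = 1) (hO' : O.transpose * O = 1)
    (h1 : |t - tstar| ≤ ((2 + N) ^ (-m)) ^ 2)
    (h2 : ‖x - xstar‖ ≤ ((2 + N) ^ (-m)) ^ 3)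
    (h3 : ‖v - vstar‖ ≤ (2 + N) ^ (-m)) :
    let Dinv : Matrix (Fin 3) (Fin 3) ℝ :=
      Matrix.diagonal fun i => if i = 0 then (1 + N) ^ ((3:ℝ)/2) else (1 + N) ^ ((1:ℝ)/2)
    let X : R3 := (WithLp.toLp 2 (Dinv.mulVec (O.transpose.mulVec (x - (t - tstar) • vstar))) : R3)
    let Xstar : R3 := (WithLp.toLp 2 (Dinv.mulVec (O.transpose.mulVec xstar)) : R3)
    let V : R3 := (WithLp.toLp 2 (Dinv.mulVec (O.transpose.mulVec (v - vstar))) : R3)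
    let r1 : ℝ := (2 + N) ^ (-(2*m)/3 + 5/6)
    |t - tstar| ≤ r1 ^ 2 ∧ ‖X - Xstar‖ ≤ r1 ^ 3 ∧ ‖V‖ ≤ r1 := by
  intro Dinv X Xstar V r1
  have hA0 : (0:ℝ) < 2 + N := by linarith
  have hA1 : (1:ℝ) ≤ 2 + N := by linarith
  have hmono : ∀ a b : ℝ, a ≤ b → (2+N)^a ≤ (2+N)^b := fun a b h =>
    Real.rpow_le_rpow_of_exponent_le hA1 h
  have hpow2 : ∀ a : ℝ, ((2+N)^a) ^ (2:ℕ) = (2+N)^(a*2) := by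
    intro a
    rw [← Real.rpow_natCast ((2+N)^a) 2, ← Real.rpow_mul hA0.le]
    norm_num
  have hpow3 : ∀ a : ℝ, ((2+N)^a) ^ (3:ℕ) = (2+N)^(a*3) := by
    intro a
    rw [← Real.rpow_natCast ((2+N)^a) 3, ← Real.rpow_mul hA0.le]
    norm_num
  have hrnn : ∀ a : ℝ, (0:ℝ) ≤ (2+N)^a := fun a => Real.rpow_nonneg hA0.le a
  have h1N : (1+N)^((3:ℝ)/2) ≤ (2+N)^((3:ℝ)/2) :=
    Real.rpow_le_rpow (by linarith) (by linarith) (by norm_num)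
  refine ⟨?_, ?_, ?_⟩
  · -- time
    refine h1.trans ?_
    rw [hpow2, hpow2]
    exact hmono _ _ (by linarith)
  · -- space
    set w : R3 := x - xstar - (t - tstar) • vstar with hw
    have hu : (X - Xstar).ofLp = Dinv.mulVec (O.transpose.mulVec w) := by
      funext i
      simp only [X, Xstar, Dinv, hw, Matrix.mulVec, dotProduct,
        Fin.sum_univ_three, PiLp.sub_apply, WithLp.ofLp_toLp, PiLp.smul_apply, Pi.sub_apply, Pi.smul_apply, smul_eq_mul,
        Matrix.diagonal_apply, Matrix.transpose_apply]
      ring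
    have hkey := key N hN O hO w (X - Xstar) hu
    have hwn : ‖w‖ ≤ ‖x - xstar‖ + |t - tstar| * ‖vstar‖ := by
      rw [hw]
      calc ‖x - xstar - (t - tstar) • vstar‖
          ≤ ‖x - xstar‖ + ‖(t - tstar) • vstar‖ := norm_sub_le _ _
        _ = ‖x - xstar‖ + |t - tstar| * ‖vstar‖ := by
            rw [norm_smul, Real.norm_eq_abs]
    have hbound : ‖x - xstar‖ + |t - tstar| * ‖vstar‖
        ≤ (2+N)^(-m*3) + (2+N)^(-m*2) * (N + 1/2) := by
      have habs : (0:ℝ) ≤ |t - tstar| := abs_nonneg _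
      have := hpow3 (-m); have := hpow2 (-m)
      have h2' : ‖x - xstar‖ ≤ (2+N)^(-m*3) := by rw [← hpow3 (-m)]; exact h2
      have h1' : |t - tstar| ≤ (2+N)^(-m*2) := by rw [← hpow2 (-m)]; exact h1
      have hv0 : (0:ℝ) ≤ ‖vstar‖ := norm_nonneg _
      nlinarith [hrnn (-m*2)]
    have hstep : (2+N)^(-m*3) + (2+N)^(-m*2) * (N + 1/2) ≤ (2+N)^(1 + -m*2) := by
      have e1 : (2+N)^(-m*3) = (2+N)^(-m) * (2+N)^(-m*2) := by
        rw [← Real.rpow_add hA0]; ring_nf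
      have e2 : (2+N)^(1 + -m*2) = (2+N) * (2+N)^(-m*2) := by
        rw [Real.rpow_add hA0, Real.rpow_one]
      have e3 : (2+N)^(-m) ≤ 1 :=
        Real.rpow_le_one_of_one_le_of_nonpos hA1 (by linarith)
      rw [e1, e2]
      nlinarith [hrnn (-m*2), hrnn (-m)]
    have hfin : (2+N)^((3:ℝ)/2) * (2+N)^(1 + -m*2) = (2+N)^((5:ℝ)/2 + -m*2) := by
      rw [← Real.rpow_add hA0]; ring_nf
    calc ‖X - Xstar‖ ≤ (1+N)^((3:ℝ)/2) * ‖w‖ := hkey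
      _ ≤ (2+N)^((3:ℝ)/2) * ((2+N)^(-m*3) + (2+N)^(-m*2) * (N + 1/2)) :=
          mul_le_mul h1N (hwn.trans hbound) (norm_nonneg _) (hrnn _)
      _ ≤ (2+N)^((3:ℝ)/2) * (2+N)^(1 + -m*2) :=
          mul_le_mul_of_nonneg_left hstep (hrnn _)
      _ = (2+N)^((5:ℝ)/2 + -m*2) := hfin
      _ ≤ r1 ^ 3 := by
          have hr : r1 = (2+N)^(-(2*m)/3 + 5/6) := rfl
          rw [hr, hpow3]
          exact hmono _ _ (by linarith)
  · -- velocity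
    have hkey := key N hN O hO (v - vstar) V rfl
    calc ‖V‖ ≤ (1+N)^((3:ℝ)/2) * ‖v - vstar‖ := hkey
      _ ≤ (2+N)^((3:ℝ)/2) * (2+N)^(-m) :=
          mul_le_mul h1N h3 (norm_nonneg _) (hrnn _)
      _ = (2+N)^((3:ℝ)/2 + -m) := by rw [← Real.rpow_add hA0]
      _ ≤ r1 := by
          have hr : r1 = (2+N)^(-(2*m)/3 + 5/6) := rfl
          rw [hr]
          exact hmono _ _ (by linarith)
end
end

section
/- Let h ∈ C^{1,1,2}([0,T] × T^3 × R^3) be periodic in x with M h ≤ 0 (the operator M as in the barrier lemma, with coefficient bounds |∂_i σ_G^{ij}| ≤ C(1+|v|)^{-2}, |σ_G^{ii}| ≤ C(1+|v|)^{-1}, |a_g| ≤ C(1+|v|)^{-1}, and σ_G positive semidefinite). Suppose additionally h is bounded above. Then sup_{[0,T]×T^3×R^3} h = sup_{x,v} h(0,x,v). -/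
open scoped BigOperators Topology

noncomputable section

/-! ### Auxiliary lemmas for the maximum principle -/

section Aux

open scoped MatrixOrder in
/-- Trace inequality: if `S` is positive semidefinite and the quadratic form of `N`
is nonpositive, then `∑ S i j * N i j ≤ 0`. -/
lemma mp_trace_ineq {n : ℕ} (S N : Matrix (Fin n) (Fin n) ℝ) (hS : S.PosSemidef)
    (hN : ∀ x : Fin n → ℝ, dotProduct x (N.mulVec x) ≤ 0) :
    ∑ i, ∑ j, S i j * N i j ≤ 0 := by
  have hsq : (CFC.sqrt S).PosSemidef := Matrix.nonneg_iff_posSemidef.mp (CFC.sqrt_nonneg S)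
  set s := CFC.sqrt S with hs
  have hmul : s * s = S := CFC.sqrt_mul_sqrt_self S (Matrix.nonneg_iff_posSemidef.mpr hS)
  have hsymm : ∀ i j, s i j = s j i := by
    intro i j
    have := congrFun (congrFun hsq.1.symm i) j
    simpa [Matrix.conjTranspose_apply] using this
  have hSsym : ∀ i j, S i j = S j i := by
    intro i j
    have := congrFun (congrFun hS.1.symm i) j
    simpa [Matrix.conjTranspose_apply] using this
  have key : ∑ i, ∑ j, S i j * N i j = Matrix.trace (s * N * s) := by
    rw [Matrix.trace_mul_cycle]
    rw [hmul]
    simp only [Matrix.trace, Matrix.diag, Matrix.mul_apply]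
    rw [Finset.sum_comm]
    refine Finset.sum_congr rfl fun i _ => Finset.sum_congr rfl fun j _ => ?_
    rw [hSsym i j]
  rw [key]
  have hdiag : ∀ i, (s * N * s) i i ≤ 0 := by
    intro i
    have heq : (s * N * s) i i
        = dotProduct (fun j => s i j) (N.mulVec (fun j => s i j)) := by
      simp only [Matrix.mul_apply, dotProduct, Matrix.mulVec, Finset.sum_mul,
        Finset.mul_sum]
      rw [Finset.sum_comm]
      refine Finset.sum_congr rfl fun j _ => Finset.sum_congr rfl fun k _ => ?_
      rw [hsymm k i]; ring
    rw [heq]; exact hN _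
  calc Matrix.trace (s * N * s) = ∑ i, (s * N * s) i i := rfl
    _ ≤ 0 := Finset.sum_nonpos fun i _ => hdiag i

/-- At a local maximum of a `C²` function of one real variable, the second
derivative is nonpositive. -/
lemma mp_secondDeriv_nonpos {f : ℝ → ℝ} (hf : ContDiff ℝ 2 f) {a : ℝ}
    (hmax : IsLocalMax f a) : deriv (deriv f) a ≤ 0 := by
  by_contra hd
  push_neg at hd
  have hf2 : ContDiff ℝ (1+1) f := by norm_num at hf ⊢; exact hf
  have hf'c : ContDiff ℝ 1 (deriv f) := (contDiff_succ_iff_deriv.mp hf2).2.2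
  have hf'0 : deriv f a = 0 := hmax.deriv_eq_zero
  have hd' : HasDerivAt (deriv f) (deriv (deriv f) a) a :=
    ((hf'c.differentiable one_ne_zero) a).hasDerivAt
  have hslope : Filter.Tendsto (slope (deriv f) a) (𝓝[>] a) (𝓝 (deriv (deriv f) a)) :=
    ((hasDerivAt_iff_tendsto_slope.mp hd').mono_left
      (nhdsWithin_mono a fun x hx => ne_of_gt hx))
  have hev1 : ∀ᶠ s in 𝓝[>] a, 0 < slope (deriv f) a s :=
    hslope.eventually (eventually_gt_nhds hd)
  have hev2 : ∀ᶠ s in 𝓝[>] a, f s ≤ f a := hmax.filter_mono nhdsWithin_le_nhds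
  have hev : ∀ᶠ s in 𝓝[>] a, 0 < deriv f s ∧ f s ≤ f a := by
    filter_upwards [hev1, hev2, self_mem_nhdsWithin] with s h1 h2 hs
    refine ⟨?_, h2⟩
    have hsa : 0 < s - a := sub_pos.mpr hs
    rw [slope_def_field, hf'0, sub_zero, div_pos_iff] at h1
    rcases h1 with ⟨hnum, _⟩ | ⟨_, hden⟩
    · exact hnum
    · linarith
  obtain ⟨u, hu, hsub⟩ := mem_nhdsGT_iff_exists_Ioc_subset.mp hev
  have hmono : StrictMonoOn f (Set.Icc a u) := by
    refine strictMonoOn_of_deriv_pos (convex_Icc a u)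
      ((hf.continuous).continuousOn) fun x hx => ?_
    rw [interior_Icc] at hx
    exact (hsub ⟨hx.1, le_of_lt hx.2⟩).1
  have hau : a < u := hu
  have h1 : f a < f u := hmono ⟨le_rfl, le_of_lt hau⟩ ⟨le_of_lt hau, le_rfl⟩ hau
  have h2 : f u ≤ f a := (hsub ⟨hau, le_rfl⟩).2
  linarith

lemma mp_hdiff_sndapply {u : R3 → ℝ} (hu : ContDiff ℝ 2 u) (w : R3) :
    Differentiable ℝ (fun v => fderiv ℝ u v w) := by
  have hdf : Differentiable ℝ (fderiv ℝ u) :=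
    (hu.fderiv_right (m := 1) (by norm_num)).differentiable one_ne_zero
  exact fun v => ((ContinuousLinearMap.apply ℝ ℝ w).differentiableAt).comp v (hdf v)

lemma mp_fderiv_fderiv_apply {g : R3 → ℝ} (hg : ContDiff ℝ 2 g) (a w w' : R3) :
    fderiv ℝ (fun v => fderiv ℝ g v w) a w' = fderiv ℝ (fderiv ℝ g) a w' w := by
  have hdf : DifferentiableAt ℝ (fderiv ℝ g) a :=
    ((hg.fderiv_right (m := 1) (by norm_num)).differentiable one_ne_zero) a
  have : (fun v => fderiv ℝ g v w)
      = fun v => ((ContinuousLinearMap.apply ℝ ℝ w) : (R3 →L[ℝ] ℝ) →L[ℝ] ℝ) (fderiv ℝ g v) :=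
    rfl
  rw [this, fderiv_comp' a ((ContinuousLinearMap.apply ℝ ℝ w).differentiableAt) hdf]
  simp

/-- Second directional derivative is nonpositive at a local max of a `C²` function. -/
lemma mp_dir_snd_nonpos {g : R3 → ℝ} (hg : ContDiff ℝ 2 g) {a : R3}
    (hmax : IsLocalMax g a) (w : R3) : fderiv ℝ (fderiv ℝ g) a w w ≤ 0 := by
  set line : ℝ → R3 := fun s => a + s • w with hline
  have hlineC : ContDiff ℝ 2 line := (contDiff_const.add (contDiff_id.smul contDiff_const))
  have hline0 : line 0 = a := by simp [hline]
  have hlined : ∀ s, HasDerivAt line w s := by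
    intro s
    simpa [hline] using ((hasDerivAt_id s).smul_const w).const_add a
  set ψ : ℝ → ℝ := fun s => g (line s) with hψ
  have hψC : ContDiff ℝ 2 ψ := hg.comp hlineC
  have hψd : ∀ s, HasDerivAt ψ (fderiv ℝ g (line s) w) s := fun s =>
    ((hg.differentiable two_ne_zero (line s)).hasFDerivAt).comp_hasDerivAt s (hlined s)
  have hderiv : deriv ψ = fun s => fderiv ℝ g (line s) w := funext fun s => (hψd s).deriv
  have hmaxψ : IsLocalMax ψ 0 := by
    have hcont : Filter.Tendsto line (𝓝 0) (𝓝 a) := by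
      rw [← hline0]; exact (hlineC.continuous.tendsto 0)
    have hev := hcont.eventually hmax
    unfold ψ
    refine hev.mono fun s hs => ?_
    simpa [hline0] using hs
  have h2 := mp_secondDeriv_nonpos hψC hmaxψ
  rw [hderiv] at h2
  have hdd : HasDerivAt (fun s => fderiv ℝ g (line s) w)
      (fderiv ℝ (fun v => fderiv ℝ g v w) a w) 0 := by
    have hdfa : DifferentiableAt ℝ (fun v => fderiv ℝ g v w) a := mp_hdiff_sndapply hg w a
    rw [← hline0] at hdfa ⊢
    exact (hdfa.hasFDerivAt).comp_hasDerivAt 0 (hlined 0)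
  rw [hdd.deriv] at h2
  rwa [mp_fderiv_fderiv_apply hg a w w] at h2

lemma mp_quad_nonpos_matrix (F : R3 →L[ℝ] R3 →L[ℝ] ℝ) (hF : ∀ w, F w w ≤ 0)
    (x : Fin 3 → ℝ) :
    dotProduct x
      ((Matrix.of fun i j => F (EuclideanSpace.single i (1:ℝ))
        (EuclideanSpace.single j 1)).mulVec x) ≤ 0 := by
  set e : Fin 3 → R3 := fun i => EuclideanSpace.single i 1 with he
  have key : dotProduct x
      ((Matrix.of fun i j => F (e i) (e j)).mulVec x)
      = F (∑ i, x i • e i) (∑ j, x j • e j) := by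
    rw [map_sum]
    simp only [ContinuousLinearMap.coe_sum', Finset.sum_apply, map_sum, map_smul,
      ContinuousLinearMap.smul_apply, smul_eq_mul, dotProduct, Matrix.mulVec,
      Matrix.of_apply, dotProduct, Finset.mul_sum]
    rw [Finset.sum_comm]
    refine Finset.sum_congr rfl fun i _ => Finset.sum_congr rfl fun j _ => ?_
    ring
  rw [key]
  exact hF _

lemma mp_div_term_expand {u : R3 → ℝ} (hu : ContDiff ℝ 2 u) {σv : Fin 3 → Fin 3 → R3 → ℝ}
    (hσ : ∀ i j, Differentiable ℝ (σv i j)) (v₀ : R3) (i : Fin 3) :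
    fderiv ℝ (fun w => ∑ j, σv i j w * fderiv ℝ u w (EuclideanSpace.single j 1)) v₀
        (EuclideanSpace.single i 1)
      = ∑ j, (fderiv ℝ (σv i j) v₀ (EuclideanSpace.single i 1)
            * fderiv ℝ u v₀ (EuclideanSpace.single j 1)
          + σv i j v₀ * fderiv ℝ (fderiv ℝ u) v₀ (EuclideanSpace.single i 1)
            (EuclideanSpace.single j 1)) := by
  have hdj : ∀ j : Fin 3, DifferentiableAt ℝ
      (fun w => fderiv ℝ u w (EuclideanSpace.single j 1)) v₀ :=
    fun j => (mp_hdiff_sndapply hu _ v₀)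
  have hterm : ∀ j : Fin 3, DifferentiableAt ℝ
      (fun w => σv i j w * fderiv ℝ u w (EuclideanSpace.single j 1)) v₀ :=
    fun j => ((hσ i j) v₀).mul (hdj j)
  rw [fderiv_fun_sum (fun j _ => hterm j)]
  rw [ContinuousLinearMap.sum_apply]
  refine Finset.sum_congr rfl fun j _ => ?_
  rw [fderiv_fun_mul ((hσ i j) v₀) (hdj j)]
  simp only [ContinuousLinearMap.add_apply, ContinuousLinearMap.smul_apply, smul_eq_mul]
  rw [mp_fderiv_fderiv_apply hu]
  ring

def MPQ : R3 → ℝ := fun v => 1 + ∑ i, v i ^ 2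

lemma MPQ_one_le (v : R3) : 1 ≤ MPQ v := by
  have : (0:ℝ) ≤ ∑ i, v i ^ 2 := Finset.sum_nonneg fun i _ => sq_nonneg _
  simp only [MPQ]; linarith

lemma MPQ_eq_norm (v : R3) : MPQ v = 1 + ‖v‖ ^ 2 := by
  rw [MPQ]
  congr 1
  rw [EuclideanSpace.norm_eq]
  rw [Real.sq_sqrt (Finset.sum_nonneg fun i _ => sq_nonneg _)]
  simp [Real.norm_eq_abs, sq_abs]

lemma mp_coord_abs_le_norm (v : R3) (i : Fin 3) : |v i| ≤ ‖v‖ := by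
  rw [EuclideanSpace.norm_eq]
  have h1 : |v i| = Real.sqrt ((v i)^2) := by rw [Real.sqrt_sq_eq_abs]
  rw [h1]
  apply Real.sqrt_le_sqrt
  have := Finset.single_le_sum (f := fun j => ‖v j‖^2)
    (fun j _ => sq_nonneg _) (Finset.mem_univ i)
  simpa [Real.norm_eq_abs, sq_abs] using this

lemma MPQ_contDiff : ContDiff ℝ 2 MPQ := by
  unfold MPQ
  refine contDiff_const.add (ContDiff.sum fun i _ => ?_)
  exact (EuclideanSpace.proj (𝕜 := ℝ) i).contDiff.pow 2

def MPQd (v : R3) : R3 →L[ℝ] ℝ := ∑ i, (2 * v i) • (EuclideanSpace.proj (𝕜 := ℝ) i)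

lemma MPQ_hasFDerivAt (v : R3) : HasFDerivAt MPQ (MPQd v) v := by
  have hi : ∀ i : Fin 3, HasFDerivAt (fun w : R3 => w i ^ 2)
      ((2 * v i) • (EuclideanSpace.proj (𝕜 := ℝ) i)) v := by
    intro i
    have hp : HasFDerivAt (fun w : R3 => w i) (EuclideanSpace.proj (𝕜 := ℝ) i) v :=
      (EuclideanSpace.proj (𝕜 := ℝ) i).hasFDerivAt
    have := hp.mul hp
    have e1 : (fun w : R3 => w i ^ 2) = (fun w => w i) * (fun w => w i) := by funext w; simp [sq]
    have e2 : (2 * v i) • (EuclideanSpace.proj (𝕜 := ℝ) i)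
        = v i • EuclideanSpace.proj (𝕜 := ℝ) i + v i • EuclideanSpace.proj (𝕜 := ℝ) i := by
      rw [two_mul, add_smul]
    rw [e1, e2]; exact this
  have := HasFDerivAt.fun_sum (fun i (_ : i ∈ Finset.univ) => hi i)
  exact this.const_add 1

lemma MPQd_apply (v : R3) (j : Fin 3) :
    MPQd v (EuclideanSpace.single j 1) = 2 * v j := by
  simp only [MPQd, ContinuousLinearMap.sum_apply, ContinuousLinearMap.smul_apply,
    EuclideanSpace.proj, PiLp.proj, ContinuousLinearMap.coe_mk', PiLp.projₗ,
    EuclideanSpace.single_apply, smul_eq_mul]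
  rw [Finset.sum_eq_single j]
  · simp
  · intro b _ hb; simp [hb]
  · simp

lemma mp_deriv_nonneg_left_max {f : ℝ → ℝ} {a b : ℝ} (hab : a < b)
    (hf : DifferentiableAt ℝ f b) (hmax : ∀ s ∈ Set.Icc a b, f s ≤ f b) :
    0 ≤ deriv f b := by
  have hslope : Filter.Tendsto (slope f b) (𝓝[<] b) (𝓝 (deriv f b)) :=
    ((hasDerivAt_iff_tendsto_slope.mp hf.hasDerivAt).mono_left
      (nhdsWithin_mono b fun x hx => ne_of_lt hx))
  refine ge_of_tendsto hslope ?_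
  have hmem : Set.Ioo a b ∈ 𝓝[<] b :=
    mem_nhdsWithin.mpr ⟨Set.Ioi a, isOpen_Ioi, hab, fun x hx => ⟨hx.1, hx.2⟩⟩
  filter_upwards [hmem] with s hs
  rw [slope_def_field]
  have h1 : f s ≤ f b := hmax s ⟨le_of_lt hs.1, le_of_lt hs.2⟩
  have h2 : s - b < 0 := sub_neg.mpr hs.2
  have h3 : f s - f b ≤ 0 := by linarith
  have := div_nonneg (neg_nonneg.mpr h3) (neg_nonneg.mpr (le_of_lt h2))
  rwa [neg_div_neg_eq] at this

lemma mp_rpow_one_le (r : ℝ) (hr : 0 ≤ r) : (1 + r) ^ (-1:ℝ) ≤ 1 := by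
  have h1 : (0:ℝ) < 1 + r := by linarith
  rw [Real.rpow_neg_one]
  rw [inv_le_one_iff₀]
  right; linarith

lemma mp_rpow_one_mul_le (r : ℝ) (hr : 0 ≤ r) : (1 + r) ^ (-1:ℝ) * r ≤ 1 := by
  have h1 : (0:ℝ) < 1 + r := by linarith
  rw [Real.rpow_neg_one]
  rw [inv_mul_le_iff₀ h1]
  linarith

lemma mp_rpow_two_mul_le (r : ℝ) (hr : 0 ≤ r) : (1 + r) ^ (-2:ℝ) * r ≤ 1 := by
  have h1 : (0:ℝ) < 1 + r := by linarith
  have h2 : (1 + r) ^ (-2:ℝ) = ((1+r)^(2:ℕ))⁻¹ := by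
    rw [← Real.rpow_natCast (1+r) 2, ← Real.rpow_neg (le_of_lt h1)]
    norm_num
  rw [h2, inv_mul_le_iff₀ (by positivity)]
  nlinarith

lemma mp_bound_aux {X c vj CC rr : ℝ} (hX : |X| ≤ CC) (hc : 0 ≤ c) (hvj : |vj| ≤ rr) :
    X * (c * (2 * vj)) ≤ CC * (2 * c * rr) := by
  calc X * (c * (2 * vj)) ≤ |X * (c * (2 * vj))| := le_abs_self _
    _ = |X| * (c * (2 * |vj|)) := by
        rw [abs_mul, abs_mul, abs_mul, abs_of_nonneg hc,
          abs_of_nonneg (by norm_num : (0:ℝ) ≤ 2)]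
    _ ≤ CC * (c * (2 * rr)) := by
        have h1 : c * (2 * |vj|) ≤ c * (2 * rr) := by
          apply mul_le_mul_of_nonneg_left _ hc; linarith
        apply mul_le_mul hX h1 (by positivity) (le_trans (abs_nonneg X) hX)
    _ = CC * (2 * c * rr) := by ring

lemma mp_bound_aux' {X c vj CC rr : ℝ} (hX : |X| ≤ CC) (hc : 0 ≤ c) (hvj : |vj| ≤ rr) :
    -(CC * (2 * c * rr)) ≤ X * (c * (2 * vj)) := by
  have hX' : |(-X)| ≤ CC := by rw [abs_neg]; exact hX
  have h2 := mp_bound_aux hX' hc hvj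
  have heq : (-X) * (c * (2 * vj)) = -(X * (c * (2 * vj))) := by ring
  rw [heq] at h2
  linarith

end Aux

set_option maxHeartbeats 2000000 in
/-- Global maximum principle: if `h` is `C^{1,1,2}`, periodic in `x`, bounded
above, and satisfies `M h ≤ 0` on `[0,T] × T³ × ℝ³` for the divergence-form
operator `M h = ∂_t h + v·∇_x h - ∇_v·(σ_G ∇_v h) - a_g·∇_v h` with `σ_G`
positive semidefinite and the coefficient bounds `|∂_i σ_G^{ij}| ≤ C(1+|v|)^{-2}`,
`|σ_G^{ii}| ≤ C(1+|v|)^{-1}`, `|a_g| ≤ C(1+|v|)^{-1}`, then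
`sup_{[0,T]×T³×ℝ³} h = sup_{x,v} h(0,x,v)`. -/
theorem stmt14 (T C B : ℝ) (hT : 0 < T) (hC : 0 < C)
    (h : ℝ → R3 → R3 → ℝ)
    (σ : ℝ → R3 → R3 → Matrix (Fin 3) (Fin 3) ℝ)
    (a : ℝ → R3 → R3 → R3)
    (hreg1 : ContDiff ℝ 1 (fun p : ℝ × R3 × R3 => h p.1 p.2.1 p.2.2))
    (hreg2 : ∀ t x, ContDiff ℝ 2 (fun v => h t x v))
    (hper : ∀ (t : ℝ) (x v : R3) (k : Fin 3 → ℤ),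
      h t (x + (WithLp.equiv 2 (Fin 3 → ℝ)).symm (fun i => (2 * Real.pi) * (k i : ℝ))) v
        = h t x v)
    (hσdiff : ∀ (t : ℝ) (x : R3) (i j : Fin 3), Differentiable ℝ fun v : R3 => σ t x v i j)
    (hσpsd : ∀ t x v, (σ t x v).PosSemidef)
    (hσd : ∀ (t : ℝ) (x v : R3) (i j : Fin 3),
      |fderiv ℝ (fun w : R3 => σ t x w i j) v (EuclideanSpace.single i 1)|
        ≤ C * (1 + ‖v‖) ^ (-2:ℝ))
    (hσdiag : ∀ (t : ℝ) (x v : R3) (i : Fin 3), |σ t x v i i| ≤ C * (1 + ‖v‖) ^ (-1:ℝ))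
    (ha : ∀ (t : ℝ) (x v : R3), ‖a t x v‖ ≤ C * (1 + ‖v‖) ^ (-1:ℝ))
    (hbdd : ∀ t ∈ Set.Icc (0:ℝ) T, ∀ (x v : R3), h t x v ≤ B)
    (hsub : ∀ t ∈ Set.Icc (0:ℝ) T, ∀ (x v : R3),
      deriv (fun s => h s x v) t
        + ∑ i : Fin 3, v i * fderiv ℝ (fun y => h t y v) x (EuclideanSpace.single i 1)
        - ∑ i : Fin 3, fderiv ℝ (fun w : R3 => ∑ j : Fin 3, σ t x w i j *
              fderiv ℝ (fun u => h t x u) w (EuclideanSpace.single j 1)) v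
            (EuclideanSpace.single i 1)
        - ∑ j : Fin 3, a t x v j *
            fderiv ℝ (fun u => h t x u) v (EuclideanSpace.single j 1) ≤ 0) :
    sSup {y : ℝ | ∃ t ∈ Set.Icc (0:ℝ) T, ∃ x v : R3, y = h t x v}
      = sSup {y : ℝ | ∃ x v : R3, y = h 0 x v} := by
  have hπ : (0:ℝ) < 2 * Real.pi := by positivity
  set k : ℝ := 31 * C with hk
  have hkpos : 0 < k := by positivity
  set S0 : Set ℝ := {y : ℝ | ∃ x v : R3, y = h 0 x v} with hS0def
  set SS : Set ℝ := {y : ℝ | ∃ t ∈ Set.Icc (0:ℝ) T, ∃ x v : R3, y = h t x v} with hSSdef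
  have h0T : (0:ℝ) ∈ Set.Icc (0:ℝ) T := ⟨le_rfl, le_of_lt hT⟩
  have hS0ne : S0.Nonempty := ⟨h 0 0 0, 0, 0, rfl⟩
  have hS0bdd : BddAbove S0 := by
    refine ⟨B, fun y hy => ?_⟩
    obtain ⟨x, v, rfl⟩ := hy
    exact hbdd 0 h0T x v
  have hSSne : SS.Nonempty := ⟨h 0 0 0, 0, h0T, 0, 0, rfl⟩
  have hSSbdd : BddAbove SS := by
    refine ⟨B, fun y hy => ?_⟩
    obtain ⟨t, ht, x, v, rfl⟩ := hy
    exact hbdd t ht x v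
  -- the cube, a compact fundamental domain for the torus
  set cube : Set R3 := {x : R3 | ∀ i, x i ∈ Set.Icc (0:ℝ) (2 * Real.pi)} with hcubedef
  have hcube_compact : IsCompact cube := by
    have himg : cube = (fun y : Fin 3 → ℝ => (WithLp.equiv 2 (Fin 3 → ℝ)).symm y) ''
        (Set.univ.pi fun _ => Set.Icc (0:ℝ) (2 * Real.pi)) := by
      ext x
      constructor
      · intro hx
        exact ⟨(WithLp.equiv 2 (Fin 3 → ℝ)) x, fun i _ => hx i, rfl⟩
      · rintro ⟨y, hy, rfl⟩
        intro i
        simpa using hy i (Set.mem_univ i)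
    rw [himg]
    exact ((isCompact_univ_pi fun _ => isCompact_Icc).image
      (PiLp.continuous_toLp _ _))
  have hcube0 : (0:R3) ∈ cube := by
    intro i
    constructor <;> simp [le_of_lt hπ]
  -- periodic reduction to the cube
  have hred : ∀ (t : ℝ) (x v : R3), ∃ x' ∈ cube, h t x' v = h t x v := by
    intro t x v
    set kk : Fin 3 → ℤ := fun i => ⌊x i / (2 * Real.pi)⌋ with hkk
    set pv : R3 := (WithLp.equiv 2 (Fin 3 → ℝ)).symm (fun i => (2 * Real.pi) * (kk i : ℝ))
      with hpv
    refine ⟨x - pv, ?_, ?_⟩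
    · intro i
      have hpvi : pv i = (2 * Real.pi) * (kk i : ℝ) := rfl
      have hsubi : (x - pv) i = x i - (2 * Real.pi) * (kk i : ℝ) := by
        rw [PiLp.sub_apply, hpvi]
      rw [hsubi, hkk]
      constructor
      · have := Int.sub_floor_div_mul_nonneg (x i) hπ
        simpa [mul_comm] using this
      · have := Int.sub_floor_div_mul_lt (x i) hπ
        have h2 : x i - ↑⌊x i / (2 * Real.pi)⌋ * (2 * Real.pi) < 2 * Real.pi := this
        rw [mul_comm] at h2
        linarith
    · have hh := hper t (x - pv) v kk
      rw [← hpv] at hh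
      rw [sub_add_cancel] at hh
      exact hh.symm
  -- Key estimate with the barrier
  have key : ∀ lam : ℝ, 0 < lam → ∀ t ∈ Set.Icc (0:ℝ) T, ∀ (x v : R3),
      h t x v - lam * Real.exp (k * t) * MPQ v ≤ sSup S0 := by
    intro lam hlam
    by_contra hcon
    push_neg at hcon
    obtain ⟨t₁, ht₁, x₁, v₁, hgt⟩ := hcon
    set g1 : ℝ := h t₁ x₁ v₁ - lam * Real.exp (k * t₁) * MPQ v₁ with hg1
    set M : ℝ := ‖v₁‖ + max 0 (B - g1) / lam + 1 with hM
    have hmax0 : 0 ≤ max 0 (B - g1) := le_max_left _ _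
    have hdiv0 : 0 ≤ max 0 (B - g1) / lam := div_nonneg hmax0 (le_of_lt hlam)
    have hM1 : 1 ≤ M := by
      simp only [hM]; linarith [norm_nonneg v₁]
    have hMv : ‖v₁‖ < M := by
      simp only [hM]; linarith
    have hMB : B - lam * (1 + M^2) < g1 := by
      have h1 : max 0 (B - g1) ≤ lam * (max 0 (B - g1) / lam) := by
        rw [mul_div_cancel₀ _ (ne_of_gt hlam)]
      have h2 : max 0 (B - g1) / lam ≤ M - 1 := by
        simp only [hM]; linarith [norm_nonneg v₁]
      have h3 : B - g1 ≤ max 0 (B - g1) := le_max_right _ _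
      have h4 : lam * (max 0 (B - g1) / lam) ≤ lam * (M - 1) :=
        mul_le_mul_of_nonneg_left h2 (le_of_lt hlam)
      have h5 : lam * (M - 1) < lam * (1 + M^2) := by
        have : M - 1 < 1 + M^2 := by nlinarith
        exact mul_lt_mul_of_pos_left this hlam
      have h6 : B - g1 < lam * (1 + M^2) :=
        lt_of_le_of_lt (le_trans h3 (le_trans h1 h4)) h5
      linarith
    -- compact domain and maximum
    set G : ℝ × R3 × R3 → ℝ :=
      fun p => h p.1 p.2.1 p.2.2 - lam * Real.exp (k * p.1) * MPQ p.2.2 with hGdef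
    have hGc : Continuous G := by
      refine ((hreg1.continuous)).sub ?_
      exact ((continuous_const.mul (Real.continuous_exp.comp
        (continuous_const.mul continuous_fst))).mul
        (MPQ_contDiff.continuous.comp (continuous_snd.comp continuous_snd)))
    set K : Set (ℝ × R3 × R3) :=
      (Set.Icc (0:ℝ) T) ×ˢ cube ×ˢ (Metric.closedBall (0:R3) M) with hKdef
    have hKc : IsCompact K :=
      isCompact_Icc.prod (hcube_compact.prod (isCompact_closedBall _ _))
    have hKne : K.Nonempty := by
      refine ⟨(0, 0, 0), h0T, hcube0, ?_⟩
      simp only [Metric.mem_closedBall, dist_zero_right, norm_zero]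
      linarith
    obtain ⟨p₀, hp₀K, hp₀max⟩ := hKc.exists_isMaxOn hKne hGc.continuousOn
    obtain ⟨t₀, x₀, v₀⟩ := p₀
    obtain ⟨ht₀mem, hx₀mem, hv₀mem⟩ := hp₀K
    have hv₀M : ‖v₀‖ ≤ M := by
      simpa [Metric.mem_closedBall, dist_zero_right] using hv₀mem
    -- maximality over the full domain with ‖v‖ ≤ M
    have hmaxD : ∀ t ∈ Set.Icc (0:ℝ) T, ∀ (x v : R3), ‖v‖ ≤ M →
        G (t, x, v) ≤ G (t₀, x₀, v₀) := by
      intro t ht x v hv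
      obtain ⟨x', hx', hx'eq⟩ := hred t x v
      have hmem : (t, x', v) ∈ K := by
        refine ⟨ht, hx', ?_⟩
        simpa [Metric.mem_closedBall, dist_zero_right] using hv
      have := hp₀max hmem
      simp only [hGdef] at this ⊢
      rw [← hx'eq]
      exact this
    have hG1 : g1 ≤ G (t₀, x₀, v₀) := by
      have := hmaxD t₁ ht₁ x₁ v₁ (le_of_lt hMv)
      simpa [hGdef, hg1] using this
    -- t₀ ≥ 0 etc.
    have ht₀0 : 0 ≤ t₀ := ht₀mem.1
    have hexp1 : 1 ≤ Real.exp (k * t₀) := by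
      rw [Real.one_le_exp_iff]
      positivity
    -- the max point is in the open ball
    have hv₀lt : ‖v₀‖ < M := by
      rcases lt_or_eq_of_le hv₀M with hlt | heq
      · exact hlt
      · exfalso
        have hQ : MPQ v₀ = 1 + M^2 := by rw [MPQ_eq_norm, heq]
        have h1 : lam * (1 + M^2) ≤ Real.exp (k * t₀) * (lam * (1 + M^2)) := by
          have hpos : 0 ≤ lam * (1 + M^2) := by positivity
          nlinarith
        have h2 : G (t₀, x₀, v₀) ≤ B - lam * (1 + M^2) := by
          simp only [hGdef]
          have hb := hbdd t₀ ht₀mem x₀ v₀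
          have : lam * (1 + M^2) ≤ lam * Real.exp (k * t₀) * MPQ v₀ := by
            rw [hQ]; nlinarith
          linarith
        linarith
    -- the max point has t₀ = 0
    have ht₀eq : t₀ = 0 := by
      by_contra ht0ne
      have ht₀pos : 0 < t₀ := lt_of_le_of_ne ht₀0 (Ne.symm ht0ne)
      set c : ℝ := lam * Real.exp (k * t₀) with hc
      have hcpos : 0 < c := by positivity
      set e : Fin 3 → R3 := fun i => EuclideanSpace.single i 1 with he
      set u : R3 → ℝ := fun v => h t₀ x₀ v with hu
      have huC : ContDiff ℝ 2 u := hreg2 t₀ x₀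
      set gv : R3 → ℝ := fun v => u v - c * MPQ v with hgv
      have hgvC : ContDiff ℝ 2 gv := huC.sub (contDiff_const.mul MPQ_contDiff)
      -- local max in v
      have hlocmax : IsLocalMax gv v₀ := by
        have hball : Metric.closedBall (0:R3) M ∈ 𝓝 v₀ :=
          Metric.closedBall_mem_nhds_of_mem (by simpa [Metric.mem_ball] using hv₀lt)
        filter_upwards [hball] with v hv
        have := hmaxD t₀ ht₀mem x₀ v
          (by simpa [Metric.mem_closedBall, dist_zero_right] using hv)
        simpa [hGdef, hgv, hu, hc] using this
      -- gradient in v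
      have hgvf : ∀ v, HasFDerivAt gv (fderiv ℝ u v - c • MPQd v) v := by
        intro v
        exact ((huC.differentiable two_ne_zero v).hasFDerivAt).sub
          ((MPQ_hasFDerivAt v).const_mul c)
      have hgrad : ∀ j : Fin 3, fderiv ℝ u v₀ (e j) = c * (2 * v₀ j) := by
        intro j
        have hz : fderiv ℝ gv v₀ = 0 := hlocmax.fderiv_eq_zero
        rw [(hgvf v₀).fderiv] at hz
        have := congrArg (fun (L : R3 →L[ℝ] ℝ) => L (e j)) hz
        simp only [ContinuousLinearMap.sub_apply, ContinuousLinearMap.smul_apply,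
          ContinuousLinearMap.zero_apply, smul_eq_mul] at this
        rw [he] at this ⊢
        rw [MPQd_apply] at this
        linarith
      -- second-order information
      set F : R3 →L[ℝ] R3 →L[ℝ] ℝ := fderiv ℝ (fderiv ℝ gv) v₀ with hF
      have hFnonpos : ∀ w, F w w ≤ 0 := fun w => mp_dir_snd_nonpos hgvC hlocmax w
      set Smat : Matrix (Fin 3) (Fin 3) ℝ := σ t₀ x₀ v₀ with hSmat
      have htr : ∑ i, ∑ j, Smat i j * (F (e i) (e j)) ≤ 0 := by
        have := mp_trace_ineq Smat (Matrix.of fun i j => F (e i) (e j))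
          (hσpsd t₀ x₀ v₀) (mp_quad_nonpos_matrix F hFnonpos)
        simpa using this
      -- relating second derivatives of gv and u
      have hNH : ∀ i j : Fin 3, F (e i) (e j)
          = fderiv ℝ (fderiv ℝ u) v₀ (e i) (e j)
            - c * (2 * (if j = i then (1:ℝ) else 0)) := by
        intro i j
        have hfun : (fun v => fderiv ℝ gv v (e j))
            = fun v => fderiv ℝ u v (e j) - (c * 2) * v j := by
          funext v
          rw [(hgvf v).fderiv]
          simp only [ContinuousLinearMap.sub_apply, ContinuousLinearMap.smul_apply,
            smul_eq_mul]
          rw [he, MPQd_apply]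
          ring
        have h1 : fderiv ℝ (fun v => fderiv ℝ gv v (e j)) v₀ (e i) = F (e i) (e j) := by
          rw [mp_fderiv_fderiv_apply hgvC]
        have hdiff1 : DifferentiableAt ℝ (fun v => fderiv ℝ u v (e j)) v₀ :=
          mp_hdiff_sndapply huC (e j) v₀
        have hdiff2 : DifferentiableAt ℝ (fun v : R3 => (c * 2) * v j) v₀ := by
          exact ((EuclideanSpace.proj (𝕜 := ℝ) j).differentiable v₀).const_mul (c*2)
        have h2 : fderiv ℝ (fun v => fderiv ℝ u v (e j) - (c * 2) * v j) v₀ (e i)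
            = fderiv ℝ (fderiv ℝ u) v₀ (e i) (e j) - (c*2) * (e i) j := by
          rw [fderiv_fun_sub hdiff1 hdiff2]
          simp only [ContinuousLinearMap.sub_apply]
          rw [mp_fderiv_fderiv_apply huC]
          congr 1
          have hcl : HasFDerivAt (fun v : R3 => c * 2 * v j)
              ((c * 2) • (EuclideanSpace.proj (𝕜 := ℝ) j)) v₀ :=
            ((EuclideanSpace.proj (𝕜 := ℝ) j).hasFDerivAt).const_mul (c * 2)
          rw [hcl.fderiv]
          simp only [ContinuousLinearMap.smul_apply, smul_eq_mul]
          rfl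
        have h3 : (e i) j = if j = i then (1:ℝ) else 0 := by
          rw [he]; exact EuclideanSpace.single_apply i 1 j
        rw [← h1, hfun, h2, h3]
        ring
      have hHbound : ∑ i, ∑ j, Smat i j * fderiv ℝ (fderiv ℝ u) v₀ (e i) (e j)
          ≤ 2 * c * ∑ i, Smat i i := by
        have hsplit : ∑ i, ∑ j, Smat i j * fderiv ℝ (fderiv ℝ u) v₀ (e i) (e j)
            = (∑ i, ∑ j, Smat i j * (F (e i) (e j)))
              + ∑ i, ∑ j, Smat i j * (c * (2 * (if j = i then (1:ℝ) else 0))) := by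
          rw [← Finset.sum_add_distrib]
          refine Finset.sum_congr rfl fun i _ => ?_
          rw [← Finset.sum_add_distrib]
          refine Finset.sum_congr rfl fun j _ => ?_
          rw [hNH i j]; ring
        have hdiagsum : ∑ i, ∑ j, Smat i j * (c * (2 * (if j = i then (1:ℝ) else 0)))
            = 2 * c * ∑ i, Smat i i := by
          rw [Finset.mul_sum]
          refine Finset.sum_congr rfl fun i _ => ?_
          rw [Finset.sum_eq_single i]
          · simp; ring
          · intro b _ hb; simp [hb]
          · simp
        rw [hsplit, hdiagsum]
        linarith
      -- time derivative bound
      have hdte : DifferentiableAt ℝ (fun s => h s x₀ v₀) t₀ := by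
        have : (fun s => h s x₀ v₀)
            = (fun p : ℝ × R3 × R3 => h p.1 p.2.1 p.2.2) ∘ (fun s => (s, x₀, v₀)) := rfl
        rw [this]
        exact ((hreg1.differentiable one_ne_zero) _).comp t₀
          (differentiableAt_id.prodMk (differentiableAt_const _))
      have hexpd : HasDerivAt (fun s => lam * Real.exp (k * s) * MPQ v₀)
          (lam * (Real.exp (k * t₀) * k) * MPQ v₀) t₀ := by
        have h1 : HasDerivAt (fun s : ℝ => k * s) k t₀ := by
          simpa using (hasDerivAt_id t₀).const_mul k
        have h2 := h1.exp
        have h3 := h2.const_mul lam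
        exact h3.mul_const (MPQ v₀)
      have hgtd : HasDerivAt (fun s => h s x₀ v₀ - lam * Real.exp (k * s) * MPQ v₀)
          (deriv (fun s => h s x₀ v₀) t₀ - lam * (Real.exp (k * t₀) * k) * MPQ v₀) t₀ :=
        (hdte.hasDerivAt).sub hexpd
      have hgtmax : ∀ s ∈ Set.Icc 0 t₀,
          (fun s => h s x₀ v₀ - lam * Real.exp (k * s) * MPQ v₀) s
            ≤ (fun s => h s x₀ v₀ - lam * Real.exp (k * s) * MPQ v₀) t₀ := by
        intro s hs
        have hsmem : s ∈ Set.Icc (0:ℝ) T := ⟨hs.1, le_trans hs.2 ht₀mem.2⟩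
        have := hmaxD s hsmem x₀ v₀ hv₀M
        simpa [hGdef] using this
      have hDt : c * (k * MPQ v₀) ≤ deriv (fun s => h s x₀ v₀) t₀ := by
        have h0 := mp_deriv_nonneg_left_max ht₀pos hgtd.differentiableAt hgtmax
        rw [hgtd.deriv] at h0
        simp only [hc]
        nlinarith [Real.exp_pos (k * t₀)]
      -- x derivative vanishes
      have hxz : fderiv ℝ (fun y => h t₀ y v₀) x₀ = 0 := by
        have hxmax : IsLocalMax (fun y => h t₀ y v₀) x₀ := by
          refine Filter.Eventually.of_forall fun y => ?_
          have := hmaxD t₀ ht₀mem y v₀ hv₀M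
          simp only [hGdef] at this
          linarith
        exact hxmax.fderiv_eq_zero
      -- assemble: use hsub at (t₀, x₀, v₀)
      have hs0 := hsub t₀ ht₀mem x₀ v₀
      have hxterm : ∑ i : Fin 3, v₀ i *
          fderiv ℝ (fun y => h t₀ y v₀) x₀ (EuclideanSpace.single i 1) = 0 := by
        rw [hxz]
        simp
      have hdivterm : ∀ i : Fin 3,
          fderiv ℝ (fun w : R3 => ∑ j : Fin 3, σ t₀ x₀ w i j *
              fderiv ℝ (fun u => h t₀ x₀ u) w (EuclideanSpace.single j 1)) v₀
            (EuclideanSpace.single i 1)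
          = ∑ j, (fderiv ℝ (fun w : R3 => σ t₀ x₀ w i j) v₀ (e i)
              * (c * (2 * v₀ j))
            + Smat i j * fderiv ℝ (fderiv ℝ u) v₀ (e i) (e j)) := by
        intro i
        have := mp_div_term_expand huC (σv := fun i j w => σ t₀ x₀ w i j)
          (fun i j => hσdiff t₀ x₀ i j) v₀ i
        rw [he]
        rw [this]
        refine Finset.sum_congr rfl fun j _ => ?_
        rw [← he]
        rw [hgrad j]
      -- bounds
      set r : ℝ := ‖v₀‖ with hr
      have hrnn : 0 ≤ r := norm_nonneg _
      have hb2 : (1 + r) ^ (-2:ℝ) * r ≤ 1 := mp_rpow_two_mul_le r hrnn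
      have hb1 : (1 + r) ^ (-1:ℝ) * r ≤ 1 := mp_rpow_one_mul_le r hrnn
      have hb0 : (1 + r) ^ (-1:ℝ) ≤ 1 := mp_rpow_one_le r hrnn
      have hrp2 : 0 ≤ (1 + r) ^ (-2:ℝ) := Real.rpow_nonneg (by linarith) _
      have hrp1 : 0 ≤ (1 + r) ^ (-1:ℝ) := Real.rpow_nonneg (by linarith) _
      -- term 1 bound
      have hP1 : ∑ i, ∑ j, fderiv ℝ (fun w : R3 => σ t₀ x₀ w i j) v₀ (e i)
          * (c * (2 * v₀ j)) ≤ 18 * c * C := by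
        have hterm : ∀ i j : Fin 3, fderiv ℝ (fun w : R3 => σ t₀ x₀ w i j) v₀ (e i)
            * (c * (2 * v₀ j)) ≤ 2 * c * C := by
          intro i j
          have h1 := hσd t₀ x₀ v₀ i j
          have h2 : |v₀ j| ≤ r := mp_coord_abs_le_norm v₀ j
          have h1' : |fderiv ℝ (fun w : R3 => σ t₀ x₀ w i j) v₀ (e i)|
              ≤ C * (1 + r) ^ (-2:ℝ) := by rw [he]; exact h1
          calc fderiv ℝ (fun w : R3 => σ t₀ x₀ w i j) v₀ (e i) * (c * (2 * v₀ j))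
              ≤ (C * (1 + r) ^ (-2:ℝ)) * (2 * c * r) :=
                mp_bound_aux h1' (le_of_lt hcpos) h2
            _ = 2 * c * C * ((1 + r) ^ (-2:ℝ) * r) := by ring
            _ ≤ 2 * c * C * 1 := by
                apply mul_le_mul_of_nonneg_left hb2 (by positivity)
            _ = 2 * c * C := by ring
        calc ∑ i, ∑ j, fderiv ℝ (fun w : R3 => σ t₀ x₀ w i j) v₀ (e i) * (c * (2 * v₀ j))
            ≤ ∑ i : Fin 3, ∑ j : Fin 3, 2 * c * C :=
              Finset.sum_le_sum fun i _ => Finset.sum_le_sum fun j _ => hterm i j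
          _ = 18 * c * C := by simp [Finset.sum_const]; ring
      -- diag bound
      have hdiagb : ∑ i, Smat i i ≤ 3 * (C * (1 + r) ^ (-1:ℝ)) := by
        calc ∑ i, Smat i i ≤ ∑ i : Fin 3, C * (1 + r) ^ (-1:ℝ) :=
            Finset.sum_le_sum fun i _ => le_trans (le_abs_self _) (hσdiag t₀ x₀ v₀ i)
          _ = 3 * (C * (1 + r) ^ (-1:ℝ)) := by simp [Finset.sum_const]
      have hP2 : 2 * c * ∑ i, Smat i i ≤ 6 * c * C := by
        calc 2 * c * ∑ i, Smat i i ≤ 2 * c * (3 * (C * (1 + r) ^ (-1:ℝ))) :=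
            mul_le_mul_of_nonneg_left hdiagb (by positivity)
          _ = 6 * c * C * ((1 + r) ^ (-1:ℝ)) := by ring
          _ ≤ 6 * c * C * 1 := mul_le_mul_of_nonneg_left hb0 (by positivity)
          _ = 6 * c * C := by ring
      -- a-term bound
      have hA : ∑ j, a t₀ x₀ v₀ j *
          fderiv ℝ (fun u => h t₀ x₀ u) v₀ (EuclideanSpace.single j 1) ≤ 6 * c * C := by
        have hterm : ∀ j : Fin 3, a t₀ x₀ v₀ j *
            fderiv ℝ (fun u => h t₀ x₀ u) v₀ (EuclideanSpace.single j 1) ≤ 2 * c * C := by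
          intro j
          have hgj : fderiv ℝ (fun u => h t₀ x₀ u) v₀ (EuclideanSpace.single j 1)
              = c * (2 * v₀ j) := by
            have := hgrad j; rw [he] at this; exact this
          rw [hgj]
          have h2 : |a t₀ x₀ v₀ j| ≤ C * (1 + r) ^ (-1:ℝ) :=
            le_trans (mp_coord_abs_le_norm _ j) (ha t₀ x₀ v₀)
          have h3 : |v₀ j| ≤ r := mp_coord_abs_le_norm v₀ j
          calc a t₀ x₀ v₀ j * (c * (2 * v₀ j))
              ≤ (C * (1 + r) ^ (-1:ℝ)) * (2 * c * r) := mp_bound_aux h2 (le_of_lt hcpos) h3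
            _ = 2 * c * C * ((1 + r) ^ (-1:ℝ) * r) := by ring
            _ ≤ 2 * c * C * 1 := mul_le_mul_of_nonneg_left hb1 (by positivity)
            _ = 2 * c * C := by ring
        calc ∑ j, a t₀ x₀ v₀ j *
            fderiv ℝ (fun u => h t₀ x₀ u) v₀ (EuclideanSpace.single j 1)
            ≤ ∑ _j : Fin 3, 2 * c * C := Finset.sum_le_sum fun j _ => hterm j
          _ = 6 * c * C := by simp [Finset.sum_const]; ring
      -- sum of divergence terms
      have hdivsum : ∑ i : Fin 3,
          fderiv ℝ (fun w : R3 => ∑ j : Fin 3, σ t₀ x₀ w i j *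
              fderiv ℝ (fun u => h t₀ x₀ u) w (EuclideanSpace.single j 1)) v₀
            (EuclideanSpace.single i 1)
          ≤ 18 * c * C + 6 * c * C := by
        have : ∑ i : Fin 3,
            fderiv ℝ (fun w : R3 => ∑ j : Fin 3, σ t₀ x₀ w i j *
                fderiv ℝ (fun u => h t₀ x₀ u) w (EuclideanSpace.single j 1)) v₀
              (EuclideanSpace.single i 1)
            = (∑ i, ∑ j, fderiv ℝ (fun w : R3 => σ t₀ x₀ w i j) v₀ (e i)
                * (c * (2 * v₀ j)))
              + ∑ i, ∑ j, Smat i j * fderiv ℝ (fderiv ℝ u) v₀ (e i) (e j) := by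
          rw [← Finset.sum_add_distrib]
          refine Finset.sum_congr rfl fun i _ => ?_
          rw [hdivterm i, Finset.sum_add_distrib]
        rw [this]
        have := le_trans hHbound hP2
        linarith
      -- final contradiction
      have hDt' : c * k ≤ deriv (fun s => h s x₀ v₀) t₀ := by
        have hQ1 : 1 ≤ MPQ v₀ := MPQ_one_le v₀
        have hck : 0 < c * k := mul_pos hcpos hkpos
        have h' := mul_le_mul_of_nonneg_left hQ1 (le_of_lt hck)
        have h'' : c * k ≤ c * (k * MPQ v₀) := by nlinarith [h']
        linarith [hDt]
      have hfinal : c * k ≤ 30 * c * C := by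
        have h1 := hs0
        rw [hxterm] at h1
        -- h1 : Dt + 0 - divsum - Asum ≤ 0
        have h2 : deriv (fun s => h s x₀ v₀) t₀
            ≤ (18 * c * C + 6 * c * C) + (6 * c * C) := by
          linarith [hdivsum, hA]
        calc c * k ≤ deriv (fun s => h s x₀ v₀) t₀ := hDt'
          _ ≤ (18 * c * C + 6 * c * C) + (6 * c * C) := h2
          _ = 30 * c * C := by ring
      have : k ≤ 30 * C := by
        have := (mul_le_mul_iff_right₀ hcpos).mp (by linarith [hfinal] : c * k ≤ c * (30 * C))
        exact this
      rw [hk] at this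
      linarith
    -- conclude: the max value is attained at t = 0, contradiction with hgt
    have hfin : G (t₀, x₀, v₀) ≤ sSup S0 := by
      have hmem : h t₀ x₀ v₀ ∈ S0 := by
        rw [ht₀eq]
        exact ⟨x₀, v₀, rfl⟩
      have hle : h t₀ x₀ v₀ ≤ sSup S0 := le_csSup hS0bdd hmem
      have hpos : 0 ≤ lam * Real.exp (k * t₀) * MPQ v₀ := by
        have := MPQ_one_le v₀
        positivity
      simp only [hGdef]
      linarith
    linarith [hG1, hgt, hfin]
  -- wrap up
  apply le_antisymm
  · apply csSup_le hSSne
    intro y hy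
    obtain ⟨t, ht, x, v, rfl⟩ := hy
    refine le_of_forall_pos_le_add fun ε hε => ?_
    have hd : 0 < Real.exp (k * t) * MPQ v := by
      have := MPQ_one_le v
      positivity
    set lam : ℝ := ε / (Real.exp (k * t) * MPQ v) with hlam
    have hlampos : 0 < lam := div_pos hε hd
    have := key lam hlampos t ht x v
    have heq : lam * Real.exp (k * t) * MPQ v = ε := by
      rw [hlam, mul_assoc]
      exact div_mul_cancel₀ _ (ne_of_gt hd)
    linarith
  · exact csSup_le_csSup hSSbdd hS0ne fun y hy => by
      obtain ⟨x, v, rfl⟩ := hy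
      exact ⟨0, h0T, x, v, rfl⟩
end
end
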